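/- The continuous-to-discrete degrading transform loses at most 2/μ in capacity: for a BMS channel W with output density f(y|0) on ℝ (symmetry f(y|0)=f(−y|1), f(y|0) ≥ f(y|1) for y ≥ 0), partition [0,∞) into ν sets A_i = {y ≥ 0 : (i−1)/ν ≤ C[λ(y)] < i/ν} (weak upper inequality for i = ν), and define the 2ν-output channel Q by Q(z_i|0) = ∫_{A_i} f(y|0)dy, Q(z̄_i|0) = ∫_{A_i} f(−y|0)dy (and symmetrically for input 1). Then 0 ≤ I(W) − I(Q) ≤ 1/ν, where I denotes symmetric capacity. -/

import Mathlib

open MeasureTheory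

/-- `C[λ]` for the pair `(p,q)` with `λ = p/q`: per-pair symmetric capacity.
For `p = q = 0` the convention `λ = 1`, `C[1] = 0` is used; when `q = 0 < p`
the Lean conventions `x/0 = 0`, `logb 2 0 = 0` yield `C = 1 = C[∞]`. -/
noncomputable def Cfun (p q : ℝ) : ℝ :=
  if p = 0 ∧ q = 0 then 0
  else 1 - p / (p + q) * Real.logb 2 ((p + q) / p)
         - q / (p + q) * Real.logb 2 ((p + q) / q)

/-- The partition sets `A_i ⊆ [0,∞)` (here `i : Fin ν` stands for `i+1` in the
paper's notation, so the last cell uses a weak upper inequality). -/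
def Aset (f : Bool → ℝ → ℝ) (ν : ℕ) (i : Fin ν) : Set ℝ :=
  {y | 0 ≤ y ∧ (i : ℝ) / ν ≤ Cfun (f false y) (f true y) ∧
    (if (i : ℕ) + 1 = ν then Cfun (f false y) (f true y) ≤ 1
     else Cfun (f false y) (f true y) < ((i : ℝ) + 1) / ν)}

/-- `Q(z_i|0) = ∫_{A_i} f(y|0) dy`. -/
noncomputable def qz (f : Bool → ℝ → ℝ) (ν : ℕ) (i : Fin ν) : ℝ :=
  ∫ y in Aset f ν i, f false y

/-- `Q(z̄_i|0) = ∫_{A_i} f(-y|0) dy`. -/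
noncomputable def qzbar (f : Bool → ℝ → ℝ) (ν : ℕ) (i : Fin ν) : ℝ :=
  ∫ y in Aset f ν i, f false (-y)

/-- Symmetric capacity of the continuous BMS channel with densities `f`. -/
noncomputable def Icont (f : Bool → ℝ → ℝ) : ℝ :=
  ∫ y in Set.Ici (0 : ℝ), (f false y + f true y) * Cfun (f false y) (f true y)

/-- Symmetric capacity of the degraded `2ν`-output channel `Q`. -/
noncomputable def Idisc (f : Bool → ℝ → ℝ) (ν : ℕ) : ℝ :=
  ∑ i : Fin ν, (qz f ν i + qzbar f ν i) * Cfun (qz f ν i) (qzbar f ν i)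

/-! ### Auxiliary analytic lemmas about `Cfun` -/

lemma Cfun_zero_zero : Cfun 0 0 = 0 := by simp [Cfun]

lemma Cfun_zero_left {q : ℝ} (hq : 0 < q) : Cfun 0 q = 1 := by
  rw [Cfun, if_neg (by simp [hq.ne'])]
  simp [hq.ne']

lemma Cfun_zero_right {p : ℝ} (hp : 0 < p) : Cfun p 0 = 1 := by
  rw [Cfun, if_neg (by simp [hp.ne'])]
  simp [hp.ne']

lemma Cfun_eq_binEntropy {p q : ℝ} (hp : 0 < p) (hq : 0 ≤ q) :
    Cfun p q = 1 - Real.binEntropy (q / (p + q)) / Real.log 2 := by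
  have hs : 0 < p + q := by linarith
  rw [Cfun, if_neg (by simp [hp.ne'])]
  rcases hq.eq_or_lt with h | h
  · subst h
    simp [hp.ne', hs.ne']
  · have h1 : (q / (p + q))⁻¹ = (p + q) / q := by rw [inv_div]
    have h2 : (1 - q / (p + q)) = p / (p + q) := by field_simp; ring
    have h3 : (p / (p + q))⁻¹ = (p + q) / p := by rw [inv_div]
    rw [Real.binEntropy, h1, h2, h3]
    simp only [Real.logb]
    ring

lemma Cfun_le_one {p q : ℝ} (hp : 0 ≤ p) (hq : 0 ≤ q) : Cfun p q ≤ 1 := by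
  rw [Cfun]
  split
  · norm_num
  have hterm : ∀ a b : ℝ, 0 ≤ a → 0 ≤ b → 0 ≤ a / (a + b) * Real.logb 2 ((a + b) / a) := by
    intro a b ha hb
    rcases ha.eq_or_lt with h | h
    · simp [← h]
    · have : (1 : ℝ) ≤ (a + b) / a := by
        rw [le_div_iff₀ h]; linarith
      have hlb := Real.logb_nonneg (by norm_num : (1:ℝ) < 2) this
      positivity
  have t1 := hterm p q hp hq
  have t2 := hterm q p hq hp
  rw [add_comm q p] at t2
  linarith

lemma Cfun_nonneg {p q : ℝ} (hp : 0 ≤ p) (hq : 0 ≤ q) : 0 ≤ Cfun p q := by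
  rcases hp.eq_or_lt with h | h
  · subst h
    rcases hq.eq_or_lt with h | h
    · simp [← h, Cfun_zero_zero]
    · rw [Cfun_zero_left h]; norm_num
  · rw [Cfun_eq_binEntropy h hq]
    have hb := Real.binEntropy_le_log_two (p := q / (p + q))
    have hl : (0:ℝ) < Real.log 2 := Real.log_pos (by norm_num)
    have : Real.binEntropy (q / (p + q)) / Real.log 2 ≤ 1 := by
      rw [div_le_one hl]; exact hb
    linarith

lemma Cfun_homog {p q : ℝ} (hp : 0 < p) (hq : 0 ≤ q) : Cfun p q = Cfun 1 (q / p) := by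
  rw [Cfun_eq_binEntropy hp hq, Cfun_eq_binEntropy one_pos (by positivity)]
  congr 2
  have hps : p + q ≠ 0 := by positivity
  field_simp

lemma Cfun_anti {s t : ℝ} (h0 : 0 ≤ s) (h1 : s ≤ t) (h2 : t ≤ 1) :
    Cfun 1 t ≤ Cfun 1 s := by
  rw [Cfun_eq_binEntropy one_pos h0, Cfun_eq_binEntropy one_pos (h0.trans h1)]
  have hl : (0:ℝ) < Real.log 2 := Real.log_pos (by norm_num)
  have key : Real.binEntropy (s / (1 + s)) ≤ Real.binEntropy (t / (1 + t)) := by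
    have hs : (0:ℝ) < 1 + s := by linarith
    have ht : (0:ℝ) < 1 + t := by linarith
    have hmem_s : s / (1 + s) ∈ Set.Icc (0:ℝ) 2⁻¹ := by
      constructor
      · positivity
      · rw [div_le_iff₀ hs]; linarith
    have hmem_t : t / (1 + t) ∈ Set.Icc (0:ℝ) 2⁻¹ := by
      constructor
      · have : (0:ℝ) ≤ t := h0.trans h1
        positivity
      · rw [div_le_iff₀ ht]; linarith
    have hle : s / (1 + s) ≤ t / (1 + t) := by
      rw [div_le_div_iff₀ hs ht]; nlinarith
    exact Real.binEntropy_strictMonoOn.monotoneOn hmem_s hmem_t hle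
  have h2' : Real.binEntropy (s / (1 + s)) / Real.log 2
      ≤ Real.binEntropy (t / (1 + t)) / Real.log 2 := by gcongr
  linarith

lemma logb_two_le_one {x : ℝ} (hx : 0 < x) (hx2 : x ≤ 2) : Real.logb 2 x ≤ 1 := by
  have := (Real.logb_le_logb (b := 2) one_lt_two hx two_pos).mpr hx2
  rwa [Real.logb_self_eq_one one_lt_two] at this

lemma log_gibbs {p q P Q : ℝ} (hp : 0 < p) (hq : 0 < q) (hP : 0 < P) (hQ : 0 < Q) :
    p * (Real.log P + Real.log (p + q) - Real.log (P + Q) - Real.log p)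
      + q * (Real.log Q + Real.log (p + q) - Real.log (P + Q) - Real.log q) ≤ 0 := by
  have hs : (0:ℝ) < p + q := by linarith
  have hS : (0:ℝ) < P + Q := by linarith
  have e1 : Real.log (P * (p + q) / ((P + Q) * p))
      = Real.log P + Real.log (p + q) - Real.log (P + Q) - Real.log p := by
    rw [Real.log_div (by positivity) (by positivity), Real.log_mul hP.ne' hs.ne',
      Real.log_mul hS.ne' hp.ne']
    ring
  have e2 : Real.log (Q * (p + q) / ((P + Q) * q))
      = Real.log Q + Real.log (p + q) - Real.log (P + Q) - Real.log q := by
    rw [Real.log_div (by positivity) (by positivity), Real.log_mul hQ.ne' hs.ne',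
      Real.log_mul hS.ne' hq.ne']
    ring
  have h1 := Real.log_le_sub_one_of_pos (x := P * (p + q) / ((P + Q) * p)) (by positivity)
  have h2 := Real.log_le_sub_one_of_pos (x := Q * (p + q) / ((P + Q) * q)) (by positivity)
  rw [e1] at h1; rw [e2] at h2
  have m1 := mul_le_mul_of_nonneg_left h1 hp.le
  have m2 := mul_le_mul_of_nonneg_left h2 hq.le
  have r1 : p * (P * (p + q) / ((P + Q) * p) - 1) = P * (p + q) / (P + Q) - p := by
    field_simp
  have r2 : q * (Q * (p + q) / ((P + Q) * q) - 1) = Q * (p + q) / (P + Q) - q := by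
    field_simp
  rw [r1] at m1; rw [r2] at m2
  have r3 : P * (p + q) / (P + Q) + Q * (p + q) / (P + Q) = p + q := by
    field_simp
  linarith

lemma gibbs_pt {p q P Q : ℝ} (hp : 0 ≤ p) (hq : 0 ≤ q) (hP : 0 < P) (hQ : 0 < Q) :
    Real.logb 2 (2 * P / (P + Q)) * p + Real.logb 2 (2 * Q / (P + Q)) * q
      ≤ (p + q) * Cfun p q := by
  have hS : (0:ℝ) < P + Q := by linarith
  have ha : Real.logb 2 (2 * P / (P + Q)) ≤ 1 :=
    logb_two_le_one (by positivity) (by rw [div_le_iff₀ hS]; linarith)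
  have hb : Real.logb 2 (2 * Q / (P + Q)) ≤ 1 :=
    logb_two_le_one (by positivity) (by rw [div_le_iff₀ hS]; linarith)
  rcases hp.eq_or_lt with hp0 | hp0
  · rcases hq.eq_or_lt with hq0 | hq0
    · simp [← hp0, ← hq0]
    · rw [← hp0, Cfun_zero_left hq0]
      nlinarith
  rcases hq.eq_or_lt with hq0 | hq0
  · rw [← hq0, Cfun_zero_right hp0]
    nlinarith
  have hs : (0:ℝ) < p + q := by linarith
  have hL : (0:ℝ) < Real.log 2 := Real.log_pos (by norm_num)
  have hC : (p + q) * Cfun p q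
      = (p + q) - p * Real.logb 2 ((p + q) / p) - q * Real.logb 2 ((p + q) / q) := by
    rw [Cfun, if_neg (by simp [hp0.ne'])]
    field_simp
  rw [hC]
  have hnum : Real.log (2 * P / (P + Q)) * p + Real.log (2 * Q / (P + Q)) * q
      ≤ (p + q) * Real.log 2 - p * Real.log ((p + q) / p) - q * Real.log ((p + q) / q) := by
    have e1 : Real.log (2 * P / (P + Q)) = Real.log 2 + Real.log P - Real.log (P + Q) := by
      rw [Real.log_div (by positivity) hS.ne', Real.log_mul two_ne_zero hP.ne']
    have e2 : Real.log (2 * Q / (P + Q)) = Real.log 2 + Real.log Q - Real.log (P + Q) := by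
      rw [Real.log_div (by positivity) hS.ne', Real.log_mul two_ne_zero hQ.ne']
    have e3 : Real.log ((p + q) / p) = Real.log (p + q) - Real.log p :=
      Real.log_div hs.ne' hp0.ne'
    have e4 : Real.log ((p + q) / q) = Real.log (p + q) - Real.log q :=
      Real.log_div hs.ne' hq0.ne'
    rw [e1, e2, e3, e4]
    have := log_gibbs hp0 hq0 hP hQ
    nlinarith [this]
  calc Real.logb 2 (2 * P / (P + Q)) * p + Real.logb 2 (2 * Q / (P + Q)) * q
      = (Real.log (2 * P / (P + Q)) * p + Real.log (2 * Q / (P + Q)) * q) / Real.log 2 := by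
        simp only [Real.logb]; ring
    _ ≤ ((p + q) * Real.log 2 - p * Real.log ((p + q) / p) - q * Real.log ((p + q) / q))
          / Real.log 2 := by gcongr
    _ = (p + q) - p * Real.logb 2 ((p + q) / p) - q * Real.logb 2 ((p + q) / q) := by
        simp only [Real.logb]
        field_simp

lemma gval {P Q : ℝ} (hP : 0 < P) (hQ : 0 < Q) :
    Real.logb 2 (2 * P / (P + Q)) * P + Real.logb 2 (2 * Q / (P + Q)) * Q
      = (P + Q) * Cfun P Q := by
  have hS : (0:ℝ) < P + Q := by linarith
  have hC : (P + Q) * Cfun P Q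
      = (P + Q) - P * Real.logb 2 ((P + Q) / P) - Q * Real.logb 2 ((P + Q) / Q) := by
    rw [Cfun, if_neg (by simp [hP.ne'])]
    field_simp
  have e1 : Real.logb 2 (2 * P / (P + Q)) = 1 + Real.logb 2 P - Real.logb 2 (P + Q) := by
    rw [Real.logb_div (by positivity) hS.ne', Real.logb_mul two_ne_zero hP.ne',
      Real.logb_self_eq_one one_lt_two]
  have e2 : Real.logb 2 (2 * Q / (P + Q)) = 1 + Real.logb 2 Q - Real.logb 2 (P + Q) := by
    rw [Real.logb_div (by positivity) hS.ne', Real.logb_mul two_ne_zero hQ.ne',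
      Real.logb_self_eq_one one_lt_two]
  have e3 : Real.logb 2 ((P + Q) / P) = Real.logb 2 (P + Q) - Real.logb 2 P :=
    Real.logb_div hS.ne' hP.ne'
  have e4 : Real.logb 2 ((P + Q) / Q) = Real.logb 2 (P + Q) - Real.logb 2 Q :=
    Real.logb_div hS.ne' hQ.ne'
  rw [hC, e1, e2, e3, e4]
  ring
section Measure

variable {f : Bool → ℝ → ℝ} {ν : ℕ}

lemma measurable_Cf (hmeas : ∀ x, Measurable (f x)) :
    Measurable fun y => Cfun (f false y) (f true y) := by
  have hcond : MeasurableSet {y : ℝ | f false y = 0 ∧ f true y = 0} := by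
    have h1 : MeasurableSet {y : ℝ | f false y = 0} :=
      (hmeas false) (measurableSet_singleton 0)
    have h2 : MeasurableSet {y : ℝ | f true y = 0} :=
      (hmeas true) (measurableSet_singleton 0)
    exact h1.inter h2
  have hlogb : ∀ g : ℝ → ℝ, Measurable g → Measurable fun y => Real.logb 2 (g y) := by
    intro g hg
    simp only [Real.logb]
    exact (Real.measurable_log.comp hg).div_const _
  have hsum : Measurable fun y => f false y + f true y := (hmeas false).add (hmeas true)
  have hbranch : Measurable fun y =>
      1 - f false y / (f false y + f true y) * Real.logb 2 ((f false y + f true y) / f false y)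
        - f true y / (f false y + f true y) * Real.logb 2 ((f false y + f true y) / f true y) := by
    apply Measurable.sub
    apply Measurable.sub measurable_const
    · exact ((hmeas false).div hsum).mul (hlogb _ (hsum.div (hmeas false)))
    · exact ((hmeas true).div hsum).mul (hlogb _ (hsum.div (hmeas true)))
  unfold Cfun
  exact Measurable.ite hcond measurable_const hbranch

lemma Aset_subset_Ici (i : Fin ν) : Aset f ν i ⊆ Set.Ici (0 : ℝ) := fun _ hy => hy.1

lemma measurableSet_Aset (hmeas : ∀ x, Measurable (f x)) (i : Fin ν) :
    MeasurableSet (Aset f ν i) := by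
  have hc := measurable_Cf hmeas
  have h1 : MeasurableSet {y : ℝ | (i : ℝ) / ν ≤ Cfun (f false y) (f true y)} :=
    hc measurableSet_Ici
  have h2 : MeasurableSet {y : ℝ |
      if (i : ℕ) + 1 = ν then Cfun (f false y) (f true y) ≤ 1
      else Cfun (f false y) (f true y) < ((i : ℝ) + 1) / ν} := by
    by_cases h : (i : ℕ) + 1 = ν
    · simp only [h, if_pos]
      exact hc measurableSet_Iic
    · simp only [h, if_neg, if_false]
      exact hc measurableSet_Iio
  have : Aset f ν i = Set.Ici (0:ℝ) ∩ ({y : ℝ | (i : ℝ) / ν ≤ Cfun (f false y) (f true y)} ∩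
      {y : ℝ | if (i : ℕ) + 1 = ν then Cfun (f false y) (f true y) ≤ 1
        else Cfun (f false y) (f true y) < ((i : ℝ) + 1) / ν}) := by
    ext y; simp [Aset, Set.mem_setOf_eq, and_assoc]
  rw [this]
  exact measurableSet_Ici.inter (h1.inter h2)

lemma Aset_cover (hν : 0 < ν) (hnonneg : ∀ x y, 0 ≤ f x y) :
    Set.Ici (0:ℝ) = ⋃ i : Fin ν, Aset f ν i := by
  apply Set.Subset.antisymm
  · intro y hy
    have hy0 : (0:ℝ) ≤ y := hy
    set c := Cfun (f false y) (f true y) with hc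
    have hc0 : 0 ≤ c := Cfun_nonneg (hnonneg false y) (hnonneg true y)
    have hc1 : c ≤ 1 := Cfun_le_one (hnonneg false y) (hnonneg true y)
    set k := min (Nat.floor ((ν:ℝ) * c)) (ν - 1) with hk
    have hkν : k < ν := by omega
    refine Set.mem_iUnion.mpr ⟨⟨k, hkν⟩, hy0, ?_, ?_⟩
    · have h1 : (k:ℝ) ≤ (Nat.floor ((ν:ℝ) * c) : ℝ) := by
        exact_mod_cast Nat.cast_le.mpr (min_le_left _ _)
      have h2 : (Nat.floor ((ν:ℝ) * c) : ℝ) ≤ (ν:ℝ) * c :=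
        Nat.floor_le (by positivity)
      have hν' : (0:ℝ) < ν := by exact_mod_cast hν
      rw [div_le_iff₀ hν']
      simp only
      linarith
    · simp only
      by_cases h : k + 1 = ν
      · simp only [h, if_pos]
        exact hc1
      · simp only [h, if_neg, if_false]
        have hklt : k < ν - 1 := by omega
        have hfloor : Nat.floor ((ν:ℝ) * c) = k := by
          rcases le_or_gt (Nat.floor ((ν:ℝ) * c)) (ν - 1) with h' | h'
          · omega
          · omega
        have h2 : (ν:ℝ) * c < (Nat.floor ((ν:ℝ) * c) : ℝ) + 1 :=
          Nat.lt_floor_add_one _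
        rw [hfloor] at h2
        have hν' : (0:ℝ) < ν := by exact_mod_cast hν
        rw [lt_div_iff₀ hν']
        linarith
  · exact Set.iUnion_subset fun i => Aset_subset_Ici i

lemma Aset_disjoint : Pairwise (Function.onFun Disjoint (Aset f ν)) := by
  have key : ∀ i j : Fin ν, i < j → Disjoint (Aset f ν i) (Aset f ν j) := by
    intro i j hij
    rw [Set.disjoint_left]
    rintro y ⟨-, -, hi3⟩ ⟨-, hj2, -⟩
    have hij' : (i : ℕ) + 1 ≤ (j : ℕ) := hij
    have hjν : (j : ℕ) < ν := j.isLt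
    have hne : (i : ℕ) + 1 ≠ ν := by omega
    rw [if_neg hne] at hi3
    have hν' : (0:ℝ) < ν := by
      have : 0 < ν := by omega
      exact_mod_cast this
    have : ((i:ℝ) + 1) ≤ (j:ℝ) := by exact_mod_cast hij'
    have hcast2 : ((i:ℝ) + 1) / ν ≤ (j:ℝ) / ν := by gcongr
    linarith
  intro i j hij
  rcases lt_or_gt_of_ne hij with h | h
  · exact key i j h
  · exact (key j i h).symm

end Measure
section Cells

variable {f : Bool → ℝ → ℝ} {ν : ℕ}

lemma integrable_gfun (hmeas : ∀ x, Measurable (f x)) (hnonneg : ∀ x y, 0 ≤ f x y)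
    (hint : ∀ x, Integrable (f x)) :
    Integrable (fun y => (f false y + f true y) * Cfun (f false y) (f true y)) := by
  apply Integrable.mono ((hint false).add (hint true))
  · exact (((hmeas false).add (hmeas true)).mul (measurable_Cf hmeas)).aestronglyMeasurable
  · apply ae_of_all
    intro y
    have h0 : 0 ≤ f false y + f true y := add_nonneg (hnonneg false y) (hnonneg true y)
    have hc0 : 0 ≤ Cfun (f false y) (f true y) :=
      Cfun_nonneg (hnonneg false y) (hnonneg true y)
    have hc1 : Cfun (f false y) (f true y) ≤ 1 :=
      Cfun_le_one (hnonneg false y) (hnonneg true y)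
    simp only [Real.norm_eq_abs, Pi.add_apply]
    rw [abs_of_nonneg (mul_nonneg h0 hc0), abs_of_nonneg h0]
    nlinarith

lemma jensen_cell (hmeas : ∀ x, Measurable (f x)) (hnonneg : ∀ x y, 0 ≤ f x y)
    (hint : ∀ x, Integrable (f x)) (hsane : ∀ y : ℝ, 0 ≤ y → f true y ≤ f false y)
    {A : Set ℝ} (hA : MeasurableSet A) (hA0 : A ⊆ Set.Ici 0) :
    ((∫ y in A, f false y) + (∫ y in A, f true y)) *
        Cfun (∫ y in A, f false y) (∫ y in A, f true y)
      ≤ ∫ y in A, (f false y + f true y) * Cfun (f false y) (f true y) := by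
  set P := ∫ y in A, f false y with hPdef
  set Q := ∫ y in A, f true y with hQdef
  have hP0 : 0 ≤ P := setIntegral_nonneg hA fun y _ => hnonneg false y
  have hQ0 : 0 ≤ Q := setIntegral_nonneg hA fun y _ => hnonneg true y
  have hRHS : 0 ≤ ∫ y in A, (f false y + f true y) * Cfun (f false y) (f true y) :=
    setIntegral_nonneg hA fun y _ =>
      mul_nonneg (add_nonneg (hnonneg false y) (hnonneg true y))
        (Cfun_nonneg (hnonneg false y) (hnonneg true y))
  rcases hQ0.eq_or_lt with hQ | hQ
  · rcases hP0.eq_or_lt with hP | hP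
    · rw [← hP, ← hQ]
      simpa [Cfun_zero_zero] using hRHS
    · -- Q = 0 < P
      have hzero : f true =ᵐ[volume.restrict A] 0 := by
        rw [← setIntegral_eq_zero_iff_of_nonneg_ae (ae_of_all _ fun y => hnonneg true y)
          (hint true).integrableOn]
        exact hQ.symm
      have hcong : ∀ᵐ y ∂(volume.restrict A),
          (f false y + f true y) * Cfun (f false y) (f true y) = f false y := by
        filter_upwards [hzero] with y hy
        simp only [Pi.zero_apply] at hy
        rw [hy, add_zero]
        rcases (hnonneg false y).eq_or_lt with h | h
        · rw [← h, Cfun_zero_zero]; ring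
        · rw [Cfun_zero_right h]; ring
      rw [integral_congr_ae hcong, ← hQ, add_zero, Cfun_zero_right hP, mul_one]
  · -- 0 < Q
    have hQP : Q ≤ P :=
      setIntegral_mono_on (hint true).integrableOn (hint false).integrableOn hA
        fun y hy => hsane y (hA0 hy)
    have hP : 0 < P := lt_of_lt_of_le hQ hQP
    have hpt : ∀ y ∈ A,
        Real.logb 2 (2 * P / (P + Q)) * f false y + Real.logb 2 (2 * Q / (P + Q)) * f true y
          ≤ (f false y + f true y) * Cfun (f false y) (f true y) :=
      fun y _ => gibbs_pt (hnonneg false y) (hnonneg true y) hP hQ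
    have hintl : IntegrableOn (fun y =>
        Real.logb 2 (2 * P / (P + Q)) * f false y
          + Real.logb 2 (2 * Q / (P + Q)) * f true y) A := by
      exact (((hint false).const_mul _).add ((hint true).const_mul _)).integrableOn
    have hmono := setIntegral_mono_on hintl (integrable_gfun hmeas hnonneg hint).integrableOn
      hA hpt
    have hsplit : ∫ y in A,
        (Real.logb 2 (2 * P / (P + Q)) * f false y
          + Real.logb 2 (2 * Q / (P + Q)) * f true y)
        = Real.logb 2 (2 * P / (P + Q)) * P + Real.logb 2 (2 * Q / (P + Q)) * Q := by
      rw [integral_add ((hint false).integrableOn.const_mul _)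
        ((hint true).integrableOn.const_mul _), integral_const_mul, integral_const_mul]
    rw [hsplit] at hmono
    calc (P + Q) * Cfun P Q
        = Real.logb 2 (2 * P / (P + Q)) * P + Real.logb 2 (2 * Q / (P + Q)) * Q :=
          (gval hP hQ).symm
      _ ≤ _ := hmono

lemma ratio_point (hnonneg : ∀ x y, 0 ≤ f x y)
    (hint : ∀ x, Integrable (f x)) (hsane : ∀ y : ℝ, 0 ≤ y → f true y ≤ f false y)
    {A : Set ℝ} (hA : MeasurableSet A) (hA0 : A ⊆ Set.Ici 0)
    (hP : 0 < ∫ y in A, f false y) :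
    ∃ y ∈ A, 0 < f false y ∧
      (∫ y in A, f true y) / (∫ y in A, f false y) * f false y ≤ f true y := by
  set P := ∫ y in A, f false y with hPdef
  set Q := ∫ y in A, f true y with hQdef
  set t := Q / P with htdef
  by_contra hcon
  push_neg at hcon
  have hnn : 0 ≤ᵐ[volume.restrict A] fun y => t * f false y - f true y := by
    filter_upwards [ae_restrict_mem hA] with y hy
    show (0:ℝ) ≤ _
    rcases (hnonneg false y).eq_or_lt with h | h
    · have h1 : f true y = 0 :=
        le_antisymm (by linarith [hsane y (hA0 hy)]) (hnonneg true y)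
      simp [← h, h1]
    · exact le_of_lt (by linarith [hcon y hy h])
  have hintl : IntegrableOn (fun y => t * f false y - f true y) A :=
    (((hint false).const_mul t).sub (hint true)).integrableOn
  have hzero : ∫ y in A, (t * f false y - f true y) = 0 := by
    rw [integral_sub ((hint false).integrableOn.const_mul t) (hint true).integrableOn,
      integral_const_mul, ← hPdef, ← hQdef, htdef]
    field_simp; ring
  have hae := (setIntegral_eq_zero_iff_of_nonneg_ae hnn hintl).mp hzero
  have hzf : f false =ᵐ[volume.restrict A] 0 := by
    filter_upwards [hae, ae_restrict_mem hA] with y h1 h2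
    simp only [Pi.zero_apply] at h1 ⊢
    by_contra hne
    have hpos : 0 < f false y := lt_of_le_of_ne (hnonneg false y) (Ne.symm hne)
    have := hcon y h2 hpos
    linarith
  have : P = 0 := by
    rw [hPdef, integral_congr_ae hzf]
    simp
  linarith

lemma cell_C_lb (hmeas : ∀ x, Measurable (f x)) (hnonneg : ∀ x y, 0 ≤ f x y)
    (hint : ∀ x, Integrable (f x)) (hsane : ∀ y : ℝ, 0 ≤ y → f true y ≤ f false y)
    (i : Fin ν) (hP : 0 < ∫ y in Aset f ν i, f false y) :
    (i : ℝ) / ν ≤ Cfun (∫ y in Aset f ν i, f false y) (∫ y in Aset f ν i, f true y) := by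
  have hA := measurableSet_Aset (f := f) (ν := ν) hmeas i
  have hA0 : Aset f ν i ⊆ Set.Ici (0:ℝ) := Aset_subset_Ici i
  obtain ⟨y, hyA, hy0, hyr⟩ := ratio_point hnonneg hint hsane hA hA0 hP
  set P := ∫ y in Aset f ν i, f false y with hPdef
  set Q := ∫ y in Aset f ν i, f true y with hQdef
  have hQ0 : 0 ≤ Q := setIntegral_nonneg hA fun y _ => hnonneg true y
  have hQP : Q ≤ P :=
    setIntegral_mono_on (hint true).integrableOn (hint false).integrableOn hA
      fun y hy => hsane y (hA0 hy)
  have ht0 : 0 ≤ Q / P := div_nonneg hQ0 hP.le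
  have hr1 : f true y / f false y ≤ 1 := (div_le_one hy0).mpr (hsane y (hA0 hyA))
  have htr : Q / P ≤ f true y / f false y := by
    rw [le_div_iff₀ hy0]
    exact hyr
  calc (i : ℝ) / ν ≤ Cfun (f false y) (f true y) := hyA.2.1
    _ = Cfun 1 (f true y / f false y) := Cfun_homog hy0 (hnonneg true y)
    _ ≤ Cfun 1 (Q / P) := Cfun_anti ht0 htr hr1
    _ = Cfun P Q := (Cfun_homog hP hQ0).symm

lemma cell_upper (hmeas : ∀ x, Measurable (f x)) (hnonneg : ∀ x y, 0 ≤ f x y)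
    (hint : ∀ x, Integrable (f x)) (hsane : ∀ y : ℝ, 0 ≤ y → f true y ≤ f false y)
    (hν : 0 < ν) (i : Fin ν) :
    ∫ y in Aset f ν i, (f false y + f true y) * Cfun (f false y) (f true y)
      ≤ ((∫ y in Aset f ν i, f false y) + (∫ y in Aset f ν i, f true y)) *
          Cfun (∫ y in Aset f ν i, f false y) (∫ y in Aset f ν i, f true y)
        + ((∫ y in Aset f ν i, f false y) + (∫ y in Aset f ν i, f true y)) / ν := by
  have hA := measurableSet_Aset (f := f) (ν := ν) hmeas i
  have hA0 : Aset f ν i ⊆ Set.Ici (0:ℝ) := Aset_subset_Ici i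
  set P := ∫ y in Aset f ν i, f false y with hPdef
  set Q := ∫ y in Aset f ν i, f true y with hQdef
  have hP0 : 0 ≤ P := setIntegral_nonneg hA fun y _ => hnonneg false y
  have hQ0 : 0 ≤ Q := setIntegral_nonneg hA fun y _ => hnonneg true y
  have hν' : (0:ℝ) < ν := by exact_mod_cast hν
  have hptC : ∀ y ∈ Aset f ν i,
      Cfun (f false y) (f true y) ≤ ((i : ℝ) + 1) / ν := by
    intro y hy
    obtain ⟨-, -, h3⟩ := hy
    by_cases h : (i : ℕ) + 1 = ν
    · rw [if_pos h] at h3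
      have hcast : ((i : ℝ) + 1) = (ν : ℝ) := by exact_mod_cast h
      rw [hcast, div_self hν'.ne']
      exact h3
    · rw [if_neg h] at h3
      exact h3.le
  have hsum : ∫ y in Aset f ν i, (f false y + f true y) = P + Q :=
    integral_add (hint false).integrableOn (hint true).integrableOn
  have hub : ∫ y in Aset f ν i, (f false y + f true y) * Cfun (f false y) (f true y)
      ≤ (((i : ℝ) + 1) / ν) * (P + Q) := by
    have h1 : ∫ y in Aset f ν i, (f false y + f true y) * Cfun (f false y) (f true y)
        ≤ ∫ y in Aset f ν i, (f false y + f true y) * (((i : ℝ) + 1) / ν) := by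
      apply setIntegral_mono_on (integrable_gfun hmeas hnonneg hint).integrableOn
        (((hint false).add (hint true)).mul_const _).integrableOn hA
      intro y hy
      exact mul_le_mul_of_nonneg_left (hptC y hy)
        (add_nonneg (hnonneg false y) (hnonneg true y))
    have h2 : ∫ y in Aset f ν i, (f false y + f true y) * (((i : ℝ) + 1) / ν)
        = (((i : ℝ) + 1) / ν) * (P + Q) := by
      rw [integral_mul_const, hsum]
      ring
    linarith
  rcases hP0.eq_or_lt with hP | hP
  · -- P = 0, hence Q = 0 and the integral vanishes
    have hQP : Q ≤ P :=
      setIntegral_mono_on (hint true).integrableOn (hint false).integrableOn hA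
        fun y hy => hsane y (hA0 hy)
    have hQz : Q = 0 := le_antisymm (hQP.trans hP.ge) hQ0
    have hlb : 0 ≤ ∫ y in Aset f ν i, (f false y + f true y) * Cfun (f false y) (f true y) :=
      setIntegral_nonneg hA fun y _ =>
        mul_nonneg (add_nonneg (hnonneg false y) (hnonneg true y))
          (Cfun_nonneg (hnonneg false y) (hnonneg true y))
    have hub2 : ∫ y in Aset f ν i, (f false y + f true y) * Cfun (f false y) (f true y)
        ≤ ∫ y in Aset f ν i, (f false y + f true y) := by
      apply setIntegral_mono_on (integrable_gfun hmeas hnonneg hint).integrableOn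
        ((hint false).add (hint true)).integrableOn hA
      intro y hy
      have h0 : 0 ≤ f false y + f true y := add_nonneg (hnonneg false y) (hnonneg true y)
      simp only [Pi.add_apply]
      nlinarith [Cfun_le_one (hnonneg false y) (hnonneg true y)]
    rw [hsum, ← hP, hQz] at hub2
    have : ∫ y in Aset f ν i, (f false y + f true y) * Cfun (f false y) (f true y) = 0 := by
      linarith
    rw [this, ← hP, hQz]
    simp
  · -- 0 < P : use the lower bound on Cfun P Q
    have hClb := cell_C_lb hmeas hnonneg hint hsane i hP
    rw [← hPdef, ← hQdef] at hClb
    have hkey : (((i : ℝ) + 1) / ν) * (P + Q) ≤ (P + Q) * Cfun P Q + (P + Q) / ν := by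
      have h1 : ((i : ℝ) / ν) * (P + Q) ≤ (P + Q) * Cfun P Q := by
        rw [mul_comm]
        exact mul_le_mul_of_nonneg_left hClb (by linarith)
      have h2 : (((i : ℝ) + 1) / ν) * (P + Q) = ((i : ℝ) / ν) * (P + Q) + (P + Q) / ν := by
        field_simp
      linarith
    linarith

end Cells
/-- the continuous-to-discrete degrading transform loses at most
`1/ν = 2/μ` in capacity. -/
theorem continuous_degrading_capacity_loss (f : Bool → ℝ → ℝ) (ν : ℕ) (hν : 0 < ν)
    (hmeas : ∀ x, Measurable (f x))
    (hnonneg : ∀ x y, 0 ≤ f x y)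
    (hint : ∀ x, Integrable (f x))
    (hdens : ∀ x, ∫ y, f x y = 1)
    (hsymm : ∀ y, f false y = f true (-y))
    (hsane : ∀ y : ℝ, 0 ≤ y → f true y ≤ f false y) :
    0 ≤ Icont f - Idisc f ν ∧ Icont f - Idisc f ν ≤ 1 / ν := by
  have hA : ∀ i : Fin ν, MeasurableSet (Aset f ν i) := measurableSet_Aset hmeas
  have hcover := Aset_cover (f := f) hν hnonneg
  have hdisj := Aset_disjoint (f := f) (ν := ν)
  have hflip : ∀ y : ℝ, f false (-y) = f true y := fun y => by rw [hsymm (-y), neg_neg]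
  have hflip' : ∀ y : ℝ, f true y = f false (-y) := fun y => (hflip y).symm
  have hqzbar : ∀ i, qzbar f ν i = ∫ y in Aset f ν i, f true y := by
    intro i
    unfold qzbar
    simp only [hflip]
  have hIcont : Icont f = ∑ i : Fin ν,
      ∫ y in Aset f ν i, (f false y + f true y) * Cfun (f false y) (f true y) := by
    rw [Icont, hcover, integral_iUnion hA hdisj
      (integrable_gfun hmeas hnonneg hint).integrableOn, tsum_fintype]
  have hIdisc : Idisc f ν = ∑ i : Fin ν,
      ((∫ y in Aset f ν i, f false y) + (∫ y in Aset f ν i, f true y)) *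
        Cfun (∫ y in Aset f ν i, f false y) (∫ y in Aset f ν i, f true y) := by
    unfold Idisc qz
    simp only [hqzbar]
  constructor
  · rw [hIcont, hIdisc, ← Finset.sum_sub_distrib]
    apply Finset.sum_nonneg
    intro i _
    rw [sub_nonneg]
    exact jensen_cell hmeas hnonneg hint hsane (hA i) (Aset_subset_Ici i)
  · have hsumP : ∑ i : Fin ν, ∫ y in Aset f ν i, f false y
        = ∫ y in Set.Ici (0:ℝ), f false y := by
      rw [hcover, integral_iUnion hA hdisj (hint false).integrableOn, tsum_fintype]
    have hsumQ : ∑ i : Fin ν, ∫ y in Aset f ν i, f true y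
        = ∫ y in Set.Ici (0:ℝ), f true y := by
      rw [hcover, integral_iUnion hA hdisj (hint true).integrableOn, tsum_fintype]
    have htot : (∫ y in Set.Ici (0:ℝ), f false y) + (∫ y in Set.Ici (0:ℝ), f true y) = 1 := by
      have h1 : ∫ y in Set.Ici (0:ℝ), f true y = ∫ y in Set.Iic (0:ℝ), f false y := by
        calc ∫ y in Set.Ici (0:ℝ), f true y
            = ∫ y in Set.Ioi (0:ℝ), f true y := by
              rw [MeasureTheory.integral_Ici_eq_integral_Ioi]
          _ = ∫ y in Set.Ioi (0:ℝ), f false (-y) := by simp only [hflip']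
          _ = ∫ y in Set.Iic (-(0:ℝ)), f false y := integral_comp_neg_Ioi 0 (f false)
          _ = ∫ y in Set.Iic (0:ℝ), f false y := by norm_num
      have h2 : ∫ y in Set.Ici (0:ℝ), f false y = ∫ y in Set.Ioi (0:ℝ), f false y :=
        MeasureTheory.integral_Ici_eq_integral_Ioi
      have h3 := intervalIntegral.integral_Iic_add_Ioi (μ := volume) (b := (0:ℝ)) (hint false).integrableOn
        (hint false).integrableOn
      rw [hdens false] at h3
      linarith
    have hν' : (0:ℝ) < ν := by exact_mod_cast hν
    calc Icont f - Idisc f ν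
        = ∑ i : Fin ν,
            ((∫ y in Aset f ν i, (f false y + f true y) * Cfun (f false y) (f true y))
              - ((∫ y in Aset f ν i, f false y) + (∫ y in Aset f ν i, f true y)) *
                Cfun (∫ y in Aset f ν i, f false y) (∫ y in Aset f ν i, f true y)) := by
          rw [hIcont, hIdisc, ← Finset.sum_sub_distrib]
      _ ≤ ∑ i : Fin ν,
            ((∫ y in Aset f ν i, f false y) + (∫ y in Aset f ν i, f true y)) / ν := by
          apply Finset.sum_le_sum
          intro i _
          have := cell_upper hmeas hnonneg hint hsane hν i
          linarith
      _ = ((∑ i : Fin ν, ∫ y in Aset f ν i, f false y)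
            + (∑ i : Fin ν, ∫ y in Aset f ν i, f true y)) / ν := by
          rw [← Finset.sum_add_distrib, Finset.sum_div]
      _ = 1 / ν := by rw [hsumP, hsumQ, htot]
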